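/- arXiv:2404.17470 — 5 statements merged into one kernel-verified Lean document; each statement's English description precedes it below -/
import Mathlib

section
/- Let h be a subalgebra of so(1,n+1) (n ≥ 1) that is indecomposable (admits no nondegenerate invariant subspace of ℝ^{1,n+1}) and non-irreducible. Then h preserves a null line of ℝ^{1,n+1}, i.e. h is conjugate to a subalgebra of the parabolic p = stab(ℝ·e_-) = (ℝ ⊕ so(n)) ⋉ ℝ^n. -/
open scoped BigOperators

attribute [local instance 100] LieRing.ofAssociativeRing

/-- Minkowski space `ℝ^{1,n+1}` in a Witt basis, coordinates indexed by `Fin (n+2)`: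
index `0` is `e₋`, indices `1,…,n` are the Euclidean directions, index `n+1` is `e₊`. -/
abbrev Vm (n : ℕ) : Type := Fin (n + 2) → ℝ

def lastIx (n : ℕ) : Fin (n + 2) := Fin.last (n + 1)

def midIx (n : ℕ) (i : Fin n) : Fin (n + 2) := ⟨i.1 + 1, by omega⟩

/-- The Minkowski inner product in the Witt basis. -/
noncomputable def wB (n : ℕ) (u v : Vm n) : ℝ :=
  u 0 * v (lastIx n) + u (lastIx n) * v 0 + ∑ i : Fin n, u (midIx n i) * v (midIx n i)

noncomputable def eMinus (n : ℕ) : Vm n := Pi.single 0 1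
noncomputable def ePlus (n : ℕ) : Vm n := Pi.single (lastIx n) 1
noncomputable def eMid (n : ℕ) (i : Fin n) : Vm n := Pi.single (midIx n i) 1

/-- The embedding `ℝⁿ ≃ V₀ ⊆ V`. -/
noncomputable def vmid (n : ℕ) (c : Fin n → ℝ) : Vm n := ∑ i : Fin n, c i • eMid n i

/-- Membership in `so(1,n+1)`: skew-symmetry with respect to the Minkowski product. -/
def IsSkewB (n : ℕ) (A : Module.End ℝ (Vm n)) : Prop :=
  ∀ u v : Vm n, wB n (A u) v + wB n u (A v) = 0

/-- The element `v̄ ∈ 𝔤₋` associated with `v ∈ ℝⁿ`: `v̄ e₊ = v`, `v̄ eᵢ = -vᵢ e₋`, `v̄ e₋ = 0`. -/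
noncomputable def barE (n : ℕ) (v : Fin n → ℝ) : Module.End ℝ (Vm n) :=
  (LinearMap.proj (lastIx n) : Vm n →ₗ[ℝ] ℝ).smulRight (vmid n v)
    - (∑ i : Fin n, v i • (LinearMap.proj (midIx n i) : Vm n →ₗ[ℝ] ℝ)).smulRight (eMinus n)

/-- The `ℝ`-component of the projection of `X` to `𝔤₀ ≅ ℝ ⊕ so(n)`. -/
noncomputable def piR (n : ℕ) (X : Module.End ℝ (Vm n)) : ℝ :=
  wB n (X (eMinus n)) (ePlus n)

/-- The projection `π₋ : 𝔭 → 𝔤₋ ≅ ℝⁿ`. -/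
noncomputable def piMinusE (n : ℕ) (X : Module.End ℝ (Vm n)) : Fin n → ℝ :=
  fun i => wB n (X (ePlus n)) (eMid n i)

/-- The action of the `𝔤₀ ≅ 𝔠𝔬(n)`-projection `π₀(X)` of `X` on `ℝⁿ`. -/
noncomputable def pi0Act (n : ℕ) (X : Module.End ℝ (Vm n)) (c : Fin n → ℝ) : Fin n → ℝ :=
  fun j => piR n X * c j + ∑ i : Fin n, wB n (X (eMid n i)) (eMid n j) * c i

/-- Membership in the parabolic `𝔭 = stab(ℝ·e₋) ⊆ so(1,n+1)`. -/
def MemP (n : ℕ) (X : Module.End ℝ (Vm n)) : Prop :=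
  IsSkewB n X ∧ X (eMinus n) ∈ Submodule.span ℝ {eMinus n}

/-- Indecomposability: no nondegenerate invariant subspace other than `⊥` and `⊤`. -/
def Indecomp (n : ℕ) (h : LieSubalgebra ℝ (Module.End ℝ (Vm n))) : Prop :=
  ∀ W : Submodule ℝ (Vm n),
    (∀ X ∈ h, ∀ w ∈ W, X w ∈ W) →
    (∀ w ∈ W, (∀ w' ∈ W, wB n w w' = 0) → w = 0) →
    W = ⊥ ∨ W = ⊤

lemma wB_sub_smul (n : ℕ) (w u : Vm n) (c : ℝ) :
    wB n (w - c • u) (w - c • u)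
      = wB n w w - c * wB n u w - c * wB n w u + c^2 * wB n u u := by
  simp only [wB, Pi.sub_apply, Pi.smul_apply, smul_eq_mul]
  have : ∀ i : Fin n, (w (midIx n i) - c * u (midIx n i)) * (w (midIx n i) - c * u (midIx n i))
      = w (midIx n i) * w (midIx n i) - c * (u (midIx n i) * w (midIx n i))
        - c * (w (midIx n i) * u (midIx n i)) + c^2 * (u (midIx n i) * u (midIx n i)) := by
    intro i; ring
  rw [Finset.sum_congr rfl (fun i _ => this i)]
  simp only [Finset.sum_add_distrib, Finset.sum_sub_distrib, ← Finset.mul_sum]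
  ring

lemma isotropic_t_eq (n : ℕ) (u : Vm n) (h1 : wB n u u = 0)
    (h2 : u 0 = u (lastIx n)) : u = 0 := by
  have hsum : 2 * (u 0 * u 0) + ∑ i : Fin n, u (midIx n i) * u (midIx n i) = 0 := by
    simp only [wB] at h1
    rw [← h2] at h1
    linarith
  have hnn : ∀ i : Fin n, (0:ℝ) ≤ u (midIx n i) * u (midIx n i) :=
    fun i => mul_self_nonneg _
  have hsnn : (0:ℝ) ≤ ∑ i : Fin n, u (midIx n i) * u (midIx n i) :=
    Finset.sum_nonneg (fun i _ => hnn i)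
  have h0 : u 0 = 0 := by
    have : u 0 * u 0 = 0 := by nlinarith [mul_self_nonneg (u 0)]
    exact mul_self_eq_zero.mp this
  have hs0 : ∑ i : Fin n, u (midIx n i) * u (midIx n i) = 0 := by nlinarith [mul_self_nonneg (u 0)]
  have hmid : ∀ i : Fin n, u (midIx n i) = 0 := by
    intro i
    exact mul_self_eq_zero.mp
      ((Finset.sum_eq_zero_iff_of_nonneg (fun i _ => hnn i)).1 hs0 i (Finset.mem_univ i))
  funext j
  rcases lt_trichotomy j.1 (n+1) with hj | hj | hj
  · rcases Nat.eq_zero_or_pos j.1 with hj0 | hj0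
    · have : j = 0 := by ext; simpa using hj0
      simpa [this] using h0
    · have : j = midIx n ⟨j.1 - 1, by omega⟩ := by
        ext; simp [midIx]; omega
      rw [this]; exact hmid _
  · have hje : j = lastIx n := by ext; simpa [lastIx, Fin.last] using hj
    rw [hje, ← h2]; exact h0
  · omega

lemma null_line (n : ℕ) (u w : Vm n) (hu : wB n u u = 0) (hw : wB n w w = 0)
    (huw : wB n u w = 0) (hwu : wB n w u = 0) (hu0 : u ≠ 0) : ∃ c : ℝ, w = c • u := by
  set t : ℝ := u 0 - u (lastIx n) with ht
  have htne : t ≠ 0 := by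
    intro h0
    exact hu0 (isotropic_t_eq n u hu (by linarith [sub_eq_zero.mp h0]))
  refine ⟨(w 0 - w (lastIx n)) / t, ?_⟩
  set c := (w 0 - w (lastIx n)) / t with hc
  have hz : w - c • u = 0 := by
    apply isotropic_t_eq n (w - c • u)
    · rw [wB_sub_smul, hu, hw, huw, hwu]; ring
    · simp only [Pi.sub_apply, Pi.smul_apply, smul_eq_mul]
      have key : c * (u 0 - u (lastIx n)) = w 0 - w (lastIx n) := by
        rw [hc, ← ht]; exact div_mul_cancel₀ _ htne
      linarith [key, mul_sub c (u 0) (u (lastIx n))]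
  exact sub_eq_zero.mp hz

/-- An indecomposable, non-irreducible subalgebra `𝔥 ⊆ so(1,n+1)` (`n ≥ 1`)
preserves a null line of `ℝ^{1,n+1}`, i.e. it is conjugate to a subalgebra of the parabolic
`𝔭 = stab(ℝ·e₋)`. -/
theorem stmt1 (n : ℕ) (hn : 1 ≤ n) (h : LieSubalgebra ℝ (Module.End ℝ (Vm n)))
    (hskew : ∀ X ∈ h, IsSkewB n X)
    (hind : Indecomp n h)
    (hnonirr : ∃ W : Submodule ℝ (Vm n),
      (∀ X ∈ h, ∀ w ∈ W, X w ∈ W) ∧ W ≠ ⊥ ∧ W ≠ ⊤) :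
    ∃ v : Vm n, v ≠ 0 ∧ wB n v v = 0 ∧ ∀ X ∈ h, X v ∈ Submodule.span ℝ {v} := by
  obtain ⟨W, hinv, hWbot, hWtop⟩ := hnonirr
  have hrad : ¬ (∀ w ∈ W, (∀ w' ∈ W, wB n w w' = 0) → w = 0) := by
    intro hnd
    rcases hind W hinv hnd with hb | ht
    · exact hWbot hb
    · exact hWtop ht
  push_neg at hrad
  obtain ⟨v, hvW, hvrad, hv0⟩ := hrad
  refine ⟨v, hv0, hvrad v hvW, ?_⟩
  intro X hX
  have hsk := hskew X hX
  have hXvW : X v ∈ W := hinv X hX v hvW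
  have hXvrad : ∀ w' ∈ W, wB n (X v) w' = 0 := by
    intro w' hw'
    have h1 := hsk v w'
    have h2 := hvrad (X w') (hinv X hX w' hw')
    linarith
  obtain ⟨c, hc⟩ := null_line n v (X v) (hvrad v hvW) (hXvrad (X v) hXvW)
    (hvrad (X v) hXvW) (hXvrad v hvW) hv0
  rw [hc]
  exact Submodule.smul_mem _ c (Submodule.mem_span_singleton_self v)
end

section
/- Let h be an indecomposable subalgebra of p ⊂ so(1,n+1) (n ≥ 1) and z_g(h) its centralizer in g = so(1,n+1). If the ℝ-component π_ℝ(h) of the projection of h to g_0 ≅ ℝ ⊕ so(n) is nonzero, then z_g(h) = {0}. Otherwise z_g(h) = { z̄ ∈ g_- : π_0(h)·z = 0 }, i.e. the centralizer consists of those elements of g_- ≅ ℝ^n annihilated by the g_0-projection of h; in particular z_g(h) ⊆ g_-. -/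
open scoped BigOperators

attribute [local instance] LieRing.ofAssociativeRing

section Aux
variable {n : ℕ}

lemma lastIx_ne_zero : lastIx n ≠ 0 := by
  simp [lastIx, Fin.ext_iff]

lemma midIx_ne_zero (i : Fin n) : midIx n i ≠ 0 := by
  simp [midIx, Fin.ext_iff]

lemma midIx_ne_last (i : Fin n) : midIx n i ≠ lastIx n := by
  intro hc
  have := congrArg Fin.val hc
  simp only [midIx, lastIx, Fin.val_last] at this
  omega

lemma midIx_inj {i j : Fin n} (h : midIx n i = midIx n j) : i = j := by
  have := Fin.ext_iff.mp h
  simp only [midIx] at this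
  exact Fin.ext (by omega)

lemma ix_cases (p : Fin (n+2)) : p = 0 ∨ p = lastIx n ∨ ∃ i : Fin n, p = midIx n i := by
  rcases p with ⟨v, hv⟩
  rcases Nat.eq_zero_or_pos v with h | h
  · left; simp [Fin.ext_iff, h]
  · by_cases h2 : v = n + 1
    · right; left; simp [lastIx, Fin.ext_iff, h2]
    · right; right
      exact ⟨⟨v - 1, by omega⟩, by simp only [midIx, Fin.ext_iff]; omega⟩

@[simp] lemma eMinus_apply_zero : eMinus n 0 = 1 := by simp [eMinus]
@[simp] lemma eMinus_apply_last : eMinus n (lastIx n) = 0 := by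
  simp [eMinus, Pi.single_apply, lastIx_ne_zero]
@[simp] lemma eMinus_apply_mid (i : Fin n) : eMinus n (midIx n i) = 0 := by
  simp [eMinus, Pi.single_apply, midIx_ne_zero]
@[simp] lemma ePlus_apply_zero : ePlus n 0 = 0 := by
  simp [ePlus, Pi.single_apply, (lastIx_ne_zero (n := n)).symm]
@[simp] lemma ePlus_apply_last : ePlus n (lastIx n) = 1 := by simp [ePlus]
@[simp] lemma ePlus_apply_mid (i : Fin n) : ePlus n (midIx n i) = 0 := by
  simp [ePlus, Pi.single_apply, midIx_ne_last]
@[simp] lemma eMid_apply_zero (i : Fin n) : eMid n i 0 = 0 := by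
  simp [eMid, Pi.single_apply, (midIx_ne_zero i).symm]
@[simp] lemma eMid_apply_last (i : Fin n) : eMid n i (lastIx n) = 0 := by
  simp [eMid, Pi.single_apply, (midIx_ne_last i).symm]
@[simp] lemma eMid_apply_mid (i j : Fin n) : eMid n i (midIx n j) = if j = i then 1 else 0 := by
  simp only [eMid, Pi.single_apply]
  by_cases h : j = i
  · simp [h]
  · rw [if_neg (fun hc => h (midIx_inj hc)), if_neg h]

@[simp] lemma vmid_apply_zero (c : Fin n → ℝ) : vmid n c 0 = 0 := by
  simp [vmid, Finset.sum_apply]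
@[simp] lemma vmid_apply_last (c : Fin n → ℝ) : vmid n c (lastIx n) = 0 := by
  simp [vmid, Finset.sum_apply]
@[simp] lemma vmid_apply_mid (c : Fin n → ℝ) (j : Fin n) : vmid n c (midIx n j) = c j := by
  simp [vmid, Finset.sum_apply]

lemma wB_comm (u v : Vm n) : wB n u v = wB n v u := by
  unfold wB
  rw [Finset.sum_congr rfl (fun i _ => mul_comm (u (midIx n i)) (v (midIx n i)))]
  ring

@[simp] lemma wB_eMinus_right (v : Vm n) : wB n v (eMinus n) = v (lastIx n) := by
  simp [wB]
@[simp] lemma wB_ePlus_right (v : Vm n) : wB n v (ePlus n) = v 0 := by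
  simp [wB]
@[simp] lemma wB_eMid_right (v : Vm n) (i : Fin n) : wB n v (eMid n i) = v (midIx n i) := by
  simp [wB, mul_ite]
@[simp] lemma wB_eMinus_left (v : Vm n) : wB n (eMinus n) v = v (lastIx n) := by
  rw [wB_comm]; simp
@[simp] lemma wB_ePlus_left (v : Vm n) : wB n (ePlus n) v = v 0 := by
  rw [wB_comm]; simp
@[simp] lemma wB_eMid_left (v : Vm n) (i : Fin n) : wB n (eMid n i) v = v (midIx n i) := by
  rw [wB_comm]; simp

lemma wB_vmid_right (v : Vm n) (c : Fin n → ℝ) :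
    wB n v (vmid n c) = ∑ i : Fin n, v (midIx n i) * c i := by
  simp [wB]
lemma wB_vmid_left (v : Vm n) (c : Fin n → ℝ) :
    wB n (vmid n c) v = ∑ i : Fin n, c i * v (midIx n i) := by
  rw [wB_comm, wB_vmid_right]
  exact Finset.sum_congr rfl fun i _ => mul_comm _ _

lemma wB_add_right (v x y : Vm n) : wB n v (x + y) = wB n v x + wB n v y := by
  simp only [wB, Pi.add_apply]
  rw [Finset.sum_congr rfl (fun i _ => mul_add (v (midIx n i)) (x (midIx n i)) (y (midIx n i))),
    Finset.sum_add_distrib]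
  ring

lemma wB_smul_right (v : Vm n) (t : ℝ) (y : Vm n) : wB n v (t • y) = t * wB n v y := by
  simp only [wB, Pi.smul_apply, smul_eq_mul]
  rw [Finset.sum_congr rfl (fun i _ => by ring :
    ∀ i ∈ Finset.univ, v (midIx n i) * (t * y (midIx n i)) = t * (v (midIx n i) * y (midIx n i))),
    ← Finset.mul_sum]
  ring

lemma wB_smul_left (t : ℝ) (v y : Vm n) : wB n (t • v) y = t * wB n v y := by
  rw [wB_comm, wB_smul_right, wB_comm]

lemma wB_sub_left (x y v : Vm n) : wB n (x - y) v = wB n x v - wB n y v := by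
  have h1 : x - y = x + (-1 : ℝ) • y := by module
  rw [h1, wB_comm, wB_add_right, wB_smul_right, wB_comm, wB_comm y v]
  ring

lemma wB_nondeg (v : Vm n) (h : ∀ y, wB n v y = 0) : v = 0 := by
  funext p
  rcases ix_cases p with rfl | rfl | ⟨i, rfl⟩
  · have := h (ePlus n); simpa using this
  · have := h (eMinus n); simpa using this
  · have := h (eMid n i); simpa using this

lemma skew_pair {Z : Module.End ℝ (Vm n)} (hZ : IsSkewB n Z) (u v : Vm n) :
    wB n (Z u) v = - wB n u (Z v) := by
  have := hZ u v; linarith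

end Aux
section Aux2
variable {n : ℕ}

lemma skew_last_minus {Z : Module.End ℝ (Vm n)} (hZ : IsSkewB n Z) :
    (Z (eMinus n)) (lastIx n) = 0 := by
  have := hZ (eMinus n) (eMinus n)
  simp only [wB_eMinus_right, wB_eMinus_left] at this
  linarith

lemma skew_zero_plus {Z : Module.End ℝ (Vm n)} (hZ : IsSkewB n Z) :
    (Z (ePlus n)) 0 = 0 := by
  have := hZ (ePlus n) (ePlus n)
  simp only [wB_ePlus_right, wB_ePlus_left] at this
  linarith

lemma skew_minus_plus {Z : Module.End ℝ (Vm n)} (hZ : IsSkewB n Z) :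
    (Z (ePlus n)) (lastIx n) = - (Z (eMinus n)) 0 := by
  have := hZ (eMinus n) (ePlus n)
  simp only [wB_ePlus_right, wB_eMinus_left] at this
  linarith

lemma skew_mid_last {Z : Module.End ℝ (Vm n)} (hZ : IsSkewB n Z) (i : Fin n) :
    (Z (eMid n i)) (lastIx n) = - (Z (eMinus n)) (midIx n i) := by
  have := hZ (eMid n i) (eMinus n)
  simp only [wB_eMinus_right, wB_eMid_left] at this
  linarith

lemma skew_mid_zero {Z : Module.End ℝ (Vm n)} (hZ : IsSkewB n Z) (i : Fin n) :
    (Z (eMid n i)) 0 = - (Z (ePlus n)) (midIx n i) := by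
  have := hZ (eMid n i) (ePlus n)
  simp only [wB_ePlus_right, wB_eMid_left] at this
  linarith

lemma skew_mid_mid {Z : Module.End ℝ (Vm n)} (hZ : IsSkewB n Z) (i j : Fin n) :
    (Z (eMid n i)) (midIx n j) = - (Z (eMid n j)) (midIx n i) := by
  have := hZ (eMid n i) (eMid n j)
  simp only [wB_eMid_right, wB_eMid_left] at this
  linarith

lemma barE_apply (v : Fin n → ℝ) (x : Vm n) :
    barE n v x = x (lastIx n) • vmid n v - (∑ i : Fin n, v i * x (midIx n i)) • eMinus n := by
  simp only [barE, LinearMap.sub_apply, LinearMap.smulRight_apply, LinearMap.proj_apply,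
    LinearMap.coe_sum, Finset.sum_apply, LinearMap.smul_apply, smul_eq_mul]

lemma barE_eMinus (v : Fin n → ℝ) : barE n v (eMinus n) = 0 := by
  rw [barE_apply]
  simp

lemma barE_ePlus (v : Fin n → ℝ) : barE n v (ePlus n) = vmid n v := by
  rw [barE_apply]
  simp

lemma barE_eMid (v : Fin n → ℝ) (i : Fin n) : barE n v (eMid n i) = -(v i) • eMinus n := by
  rw [barE_apply]
  simp [mul_ite, Finset.sum_ite_eq]

lemma vmid_single (i : Fin n) : vmid n (Pi.single i 1) = eMid n i := by
  funext p
  rcases ix_cases p with rfl | rfl | ⟨j, rfl⟩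
  · simp
  · simp
  · rw [vmid_apply_mid, eMid_apply_mid]
    simp [Pi.single_apply]

lemma memP_eMinus {X : Module.End ℝ (Vm n)} (hX : MemP n X) :
    X (eMinus n) = piR n X • eMinus n := by
  obtain ⟨c, hc⟩ := Submodule.mem_span_singleton.mp hX.2
  have hpi : piR n X = c := by
    rw [piR, ← hc]
    simp [wB_smul_left]
  rw [hpi, hc]

lemma barE_eq_zero (z : Fin n → ℝ) (hz : ∀ i, z i = 0) : barE n z = 0 := by
  apply LinearMap.ext
  intro v
  rw [barE_apply]
  have h1 : vmid n z = 0 := by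
    unfold vmid
    apply Finset.sum_eq_zero
    intro i _
    rw [hz i, zero_smul]
  simp [h1, hz]

end Aux2
section Back
variable {n : ℕ}

lemma barE_skew (z : Fin n → ℝ) : IsSkewB n (barE n z) := by
  intro u v
  rw [barE_apply, barE_apply, wB_comm u, wB_sub_left, wB_sub_left,
    wB_smul_left, wB_smul_left, wB_smul_left, wB_smul_left,
    wB_vmid_left, wB_vmid_left, wB_eMinus_left, wB_eMinus_left]
  ring

lemma barE_comm (h : LieSubalgebra ℝ (Module.End ℝ (Vm n)))
    (hp : ∀ X ∈ h, MemP n X) (z : Fin n → ℝ)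
    (hz : ∀ X ∈ h, pi0Act n X z = 0) (X : Module.End ℝ (Vm n)) (hX : X ∈ h) :
    barE n z * X = X * barE n z := by
  have hXs : IsSkewB n X := (hp X hX).1
  have hXm : X (eMinus n) = piR n X • eMinus n := memP_eMinus (hp X hX)
  set α := piR n X with hα
  have hz' : ∀ i : Fin n, α * z i + ∑ j : Fin n, (X (eMid n j)) (midIx n i) * z j = 0 := by
    intro i
    have := congrFun (hz X hX) i
    simp only [pi0Act, wB_eMid_right, Pi.zero_apply] at this
    exact this
  have hXlast_mid : ∀ i : Fin n, (X (eMid n i)) (lastIx n) = 0 := by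
    intro i
    rw [skew_mid_last hXs i, hXm]
    simp
  have hXlast_plus : (X (ePlus n)) (lastIx n) = -α := by
    rw [skew_minus_plus hXs, hXm]
    simp
  apply Module.Basis.ext (Pi.basisFun ℝ (Fin (n+2)))
  intro p
  simp only [Module.End.mul_apply, Pi.basisFun_apply]
  rcases ix_cases p with rfl | rfl | ⟨i, rfl⟩
  · -- p = 0 : the vector is eMinus
    have he : (Pi.single (0 : Fin (n+2)) (1:ℝ)) = eMinus n := rfl
    rw [he, hXm, map_smul, barE_eMinus]
    simp
  · -- p = last : the vector is ePlus
    have he : (Pi.single (lastIx n) (1:ℝ)) = ePlus n := rfl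
    rw [he, barE_ePlus, barE_apply]
    have hXv : X (vmid n z) = ∑ i : Fin n, z i • X (eMid n i) := by
      rw [vmid, map_sum]
      exact Finset.sum_congr rfl fun i _ => map_smul X _ _
    rw [hXv]
    funext q
    rw [Finset.sum_apply]
    simp only [Pi.smul_apply, smul_eq_mul, Pi.sub_apply]
    rcases ix_cases q with rfl | rfl | ⟨k, rfl⟩
    · have hrew : (∑ x : Fin n, z x * (X (eMid n x)) 0)
          = -∑ x : Fin n, z x * (X (ePlus n)) (midIx n x) := by
        rw [← Finset.sum_neg_distrib]
        refine Finset.sum_congr rfl fun x _ => ?_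
        rw [skew_mid_zero hXs x]
        ring
      rw [hrew]
      simp only [hXlast_plus, vmid_apply_zero, eMinus_apply_zero]
      ring
    · have hrew : (∑ x : Fin n, z x * (X (eMid n x)) (lastIx n)) = 0 :=
        Finset.sum_eq_zero fun x _ => by rw [hXlast_mid x, mul_zero]
      rw [hrew]
      simp [hXlast_plus]
    · have hrew : (∑ x : Fin n, z x * (X (eMid n x)) (midIx n k))
          = -(α * z k) := by
        have h2 := hz' k
        have h3 : ∀ x ∈ Finset.univ, z x * (X (eMid n x)) (midIx n k)
            = (X (eMid n x)) (midIx n k) * z x := fun x _ => mul_comm _ _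
        rw [Finset.sum_congr rfl h3]
        linarith
      rw [hrew]
      simp only [hXlast_plus, vmid_apply_mid, eMinus_apply_mid, mul_zero, sub_zero]
      ring
  · -- p = mid i : the vector is eMid i
    have he : (Pi.single (midIx n i) (1:ℝ)) = eMid n i := rfl
    rw [he, barE_eMid, map_smul, hXm, barE_apply]
    have hsum : ∑ j : Fin n, z j * (X (eMid n i)) (midIx n j) = α * z i := by
      have h2 := hz' i
      have h3 : ∀ j ∈ Finset.univ, z j * (X (eMid n i)) (midIx n j)
          = -((X (eMid n j)) (midIx n i) * z j) := by
        intro j _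
        rw [skew_mid_mid hXs i j]
        ring
      rw [Finset.sum_congr rfl h3, Finset.sum_neg_distrib]
      linarith
    rw [hXlast_mid i, hsum, zero_smul, zero_sub, smul_smul, ← neg_smul]
    congr 1
    ring

end Back
section Pi0
variable {n : ℕ}

lemma pi0_of_barE_comm {X : Module.End ℝ (Vm n)} (hXp : MemP n X) (w : Fin n → ℝ)
    (hc : barE n w * X = X * barE n w) : pi0Act n X w = 0 := by
  have hXs : IsSkewB n X := hXp.1
  have hXm : X (eMinus n) = piR n X • eMinus n := memP_eMinus hXp
  funext i
  have hXe_last : (X (eMid n i)) (lastIx n) = 0 := by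
    rw [skew_mid_last hXs, hXm]; simp
  have hcm : barE n w (X (eMid n i)) = X (barE n w (eMid n i)) := by
    have h0 : (barE n w * X) (eMid n i) = (X * barE n w) (eMid n i) := by rw [hc]
    simpa only [Module.End.mul_apply] using h0
  rw [barE_eMid, map_smul, hXm, barE_apply, hXe_last, zero_smul, zero_sub, smul_smul] at hcm
  have h1 := congrFun hcm 0
  simp only [Pi.neg_apply, Pi.smul_apply, smul_eq_mul, eMinus_apply_zero, mul_one] at h1
  simp only [pi0Act, wB_eMid_right, Pi.zero_apply]
  have h2 : (∑ j : Fin n, (X (eMid n j)) (midIx n i) * w j)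
      = -∑ j : Fin n, w j * (X (eMid n i)) (midIx n j) := by
    rw [← Finset.sum_neg_distrib]
    refine Finset.sum_congr rfl fun j _ => ?_
    rw [skew_mid_mid hXs j i]
    ring
  rw [h2]
  linarith [h1]

end Pi0
section Forward
variable {n : ℕ}

lemma wB_zero_left (v : Vm n) : wB n 0 v = 0 := by simp [wB]

lemma wB_sub_right (v x y : Vm n) : wB n v (x - y) = wB n v x - wB n v y := by
  rw [wB_comm, wB_sub_left, wB_comm x v, wB_comm y v]

lemma forward_main (hn : 1 ≤ n) (h : LieSubalgebra ℝ (Module.End ℝ (Vm n)))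
    (hp : ∀ X ∈ h, MemP n X) (hind : Indecomp n h)
    (Z : Module.End ℝ (Vm n)) (hZs : IsSkewB n Z)
    (hZc : ∀ X ∈ h, Z * X = X * Z) :
    ∃ w : Fin n → ℝ, Z = barE n w ∧ ∀ X ∈ h, pi0Act n X w = 0 := by
  have hNn : Module.finrank ℝ (Vm n) = n + 2 := Module.finrank_fin_fun (R := ℝ)
  set a : ℝ := (Z (eMinus n)) 0 with ha_def
  -- Step A : the g₊-component of Z vanishes
  have hu : ∀ i : Fin n, (Z (eMinus n)) (midIx n i) = 0 := by
    by_contra hcon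
    push_neg at hcon
    obtain ⟨i₀, hi₀⟩ := hcon
    set W : Submodule ℝ (Vm n) := Submodule.span ℝ {Z (eMinus n)} with hW
    have hinv : ∀ X ∈ h, ∀ v ∈ W, X v ∈ W := by
      intro X hX v hv
      obtain ⟨t, rfl⟩ := Submodule.mem_span_singleton.mp hv
      have h1 : X (Z (eMinus n)) = piR n X • Z (eMinus n) := by
        have h2 : (X * Z) (eMinus n) = (Z * X) (eMinus n) := by rw [hZc X hX]
        simp only [Module.End.mul_apply] at h2
        rw [h2, memP_eMinus (hp X hX), map_smul]
      rw [map_smul, h1]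
      exact Submodule.smul_mem _ _ (Submodule.smul_mem _ _ (Submodule.mem_span_singleton_self _))
    have hnd : ∀ v ∈ W, (∀ v' ∈ W, wB n v v' = 0) → v = 0 := by
      intro v hv hperp
      obtain ⟨t, rfl⟩ := Submodule.mem_span_singleton.mp hv
      have h1 := hperp (Z (eMinus n)) (Submodule.mem_span_singleton_self _)
      rw [wB_smul_left] at h1
      have h2 : 0 < wB n (Z (eMinus n)) (Z (eMinus n)) := by
        have h3 : (0:ℝ) < ∑ i : Fin n,
            (Z (eMinus n)) (midIx n i) * (Z (eMinus n)) (midIx n i) :=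
          Finset.sum_pos' (fun i _ => mul_self_nonneg _)
            ⟨i₀, Finset.mem_univ _, mul_self_pos.mpr hi₀⟩
        unfold wB
        rw [skew_last_minus hZs]
        simpa using h3
      have h4 : t = 0 := by
        rcases mul_eq_zero.mp h1 with h' | h'
        · exact h'
        · exact absurd h' (ne_of_gt h2)
      rw [h4, zero_smul]
    rcases hind W hinv hnd with hbot | htop
    · have hm : Z (eMinus n) ∈ W := Submodule.mem_span_singleton_self _
      rw [hbot] at hm
      have h0 : Z (eMinus n) = 0 := (Submodule.mem_bot ℝ).mp hm
      exact hi₀ (by rw [h0]; rfl)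
    · have hm : ePlus n ∈ W := by rw [htop]; trivial
      obtain ⟨t, ht⟩ := Submodule.mem_span_singleton.mp hm
      have h1 := congrFun ht (lastIx n)
      rw [Pi.smul_apply, smul_eq_mul, skew_last_minus hZs, ePlus_apply_last, mul_zero] at h1
      exact zero_ne_one h1
  -- Step B
  have hZm : Z (eMinus n) = a • eMinus n := by
    funext p
    rcases ix_cases p with rfl | rfl | ⟨i, rfl⟩
    · simp [ha_def]
    · simp [skew_last_minus hZs]
    · simp [hu i]
  -- Step C : T = Z² - a² is nilpotent
  set T : Module.End ℝ (Vm n) := Z * Z - (a*a) • 1 with hT_def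
  have hTapp : ∀ v, T v = Z (Z v) - (a*a) • v := by
    intro v
    simp [hT_def, Module.End.mul_apply, LinearMap.sub_apply, LinearMap.smul_apply]
  have hTe : T (eMinus n) = 0 := by
    rw [hTapp, hZm, map_smul, hZm, smul_smul]
    simp
  have hTsym : ∀ v y, wB n (T v) y = wB n v (T y) := by
    intro v y
    have e1 := skew_pair hZs (Z v) y
    have e2 := skew_pair hZs v (Z y)
    rw [hTapp, hTapp, wB_sub_left, wB_sub_right, wB_smul_left, wB_smul_right]
    linarith
  have hTpow_sym : ∀ (m : ℕ) (v y : Vm n), wB n ((T^m) v) y = wB n v ((T^m) y) := by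
    intro m
    induction m with
    | zero => intro v y; simp
    | succ m ih =>
      intro v y
      calc wB n ((T^(m+1)) v) y = wB n (T ((T^m) v)) y := by
            rw [pow_succ', Module.End.mul_apply]
        _ = wB n ((T^m) v) (T y) := hTsym _ _
        _ = wB n v ((T^m) (T y)) := ih _ _
        _ = wB n v ((T^(m+1)) y) := by rw [pow_succ, Module.End.mul_apply]
  have hTcomm : ∀ X ∈ h, T * X = X * T := by
    intro X hX
    have h1 : Z * Z * X = X * (Z * Z) := by
      rw [mul_assoc, hZc X hX, ← mul_assoc, hZc X hX, mul_assoc]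
    rw [hT_def, sub_mul, mul_sub, h1, smul_mul_assoc, mul_smul_comm, one_mul, mul_one]
  have hker_top : ∀ v, (T^(n+2)) v = 0 := by
    set W := LinearMap.ker (T^(n+2)) with hW
    have hinv : ∀ X ∈ h, ∀ v ∈ W, X v ∈ W := by
      intro X hX v hv
      rw [hW, LinearMap.mem_ker] at hv ⊢
      have hc : (T^(n+2)) * X = X * (T^(n+2)) := (Commute.pow_left (hTcomm X hX) (n+2))
      have h2 : (T^(n+2)) (X v) = X ((T^(n+2)) v) := by
        have h3 : ((T^(n+2)) * X) v = (X * (T^(n+2))) v := by rw [hc]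
        simpa only [Module.End.mul_apply] using h3
      rw [h2, hv, map_zero]
    have hnd : ∀ v ∈ W, (∀ v' ∈ W, wB n v v' = 0) → v = 0 := by
      intro v hv hperp
      have hker_eq : LinearMap.ker (T^((n+2)+(n+2))) = LinearMap.ker (T^(n+2)) := by
        have e1 := Module.End.ker_pow_eq_ker_pow_finrank_of_le
          (f := T) (m := (n+2)+(n+2)) (by rw [hNn]; omega)
        have e2 := Module.End.ker_pow_eq_ker_pow_finrank_of_le
          (f := T) (m := (n+2)) (by rw [hNn])
        exact e1.trans e2.symm
      have hdisj : LinearMap.ker (T^(n+2)) ⊓ LinearMap.range (T^(n+2)) = ⊥ := by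
        rw [Submodule.eq_bot_iff]
        rintro x ⟨hxk, s, rfl⟩
        have h2N : (T^((n+2)+(n+2))) s = 0 := by
          rw [pow_add, Module.End.mul_apply]
          exact LinearMap.mem_ker.mp hxk
        have : s ∈ LinearMap.ker (T^(n+2)) := by
          rw [← hker_eq, LinearMap.mem_ker]
          exact h2N
        exact LinearMap.mem_ker.mp this
      have hfr : Module.finrank ℝ
          ((LinearMap.ker (T^(n+2)) ⊔ LinearMap.range (T^(n+2))) : Submodule ℝ (Vm n))
          = Module.finrank ℝ (Vm n) := by
        have e1 := Submodule.finrank_sup_add_finrank_inf_eq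
          (LinearMap.ker (T^(n+2))) (LinearMap.range (T^(n+2)))
        have e2 := LinearMap.finrank_range_add_finrank_ker (T^(n+2))
        rw [hdisj, finrank_bot] at e1
        omega
      have hsup := Submodule.eq_top_of_finrank_eq hfr
      apply wB_nondeg
      intro y
      have hy : y ∈ LinearMap.ker (T^(n+2)) ⊔ LinearMap.range (T^(n+2)) := by
        rw [hsup]; trivial
      obtain ⟨k, hk, r, hr, rfl⟩ := Submodule.mem_sup.mp hy
      obtain ⟨s, rfl⟩ := hr
      rw [wB_add_right, hperp k hk, ← hTpow_sym, LinearMap.mem_ker.mp hv, wB_zero_left]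
      ring
    rcases hind W hinv hnd with hbot | htop
    · exfalso
      have hmem : eMinus n ∈ W := by
        rw [hW, LinearMap.mem_ker]
        have e1 : (T^(n+2)) (eMinus n) = (T^(n+1)) (T (eMinus n)) := by
          rw [pow_succ, Module.End.mul_apply]
        rw [e1, hTe, map_zero]
      rw [hbot] at hmem
      have h0 := (Submodule.mem_bot ℝ).mp hmem
      have h1 := congrFun h0 0
      simp at h1
    · intro v
      have hv : v ∈ W := by rw [htop]; trivial
      exact LinearMap.mem_ker.mp hv
  -- Step D : the so(n)+E part of Z vanishes
  have hZlast : ∀ v : Vm n, (Z v) (lastIx n) = -a * v (lastIx n) := by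
    intro v
    have h1 : (Z v) (lastIx n) = wB n (Z v) (eMinus n) := (wB_eMinus_right _).symm
    rw [h1, skew_pair hZs, hZm, wB_smul_right, wB_eMinus_right]
    ring
  have hTlast : ∀ v : Vm n, (T v) (lastIx n) = 0 := by
    intro v
    rw [hTapp]
    simp only [Pi.sub_apply, Pi.smul_apply, smul_eq_mul]
    rw [hZlast, hZlast]
    ring
  set S : (Fin n → ℝ) → (Fin n → ℝ) := fun c j => (T (vmid n c)) (midIx n j) with hS_def
  have hdecomp : ∀ y : Vm n, y (lastIx n) = 0 →
      y = y 0 • eMinus n + vmid n (fun j => y (midIx n j)) := by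
    intro y hy
    funext p
    rcases ix_cases p with rfl | rfl | ⟨i, rfl⟩
    · simp
    · simp [hy]
    · simp
  have hiterate : ∀ (k : ℕ) (c : Fin n → ℝ),
      ∃ t : ℝ, (T^k) (vmid n c) = t • eMinus n + vmid n (S^[k] c) := by
    intro k
    induction k with
    | zero => intro c; exact ⟨0, by simp⟩
    | succ k ih =>
      intro c
      obtain ⟨t, ht⟩ := ih c
      have h1 : (T^(k+1)) (vmid n c) = T ((T^k) (vmid n c)) := by
        rw [pow_succ', Module.End.mul_apply]
      rw [h1, ht, map_add, map_smul, hTe, smul_zero, zero_add]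
      refine ⟨(T (vmid n (S^[k] c))) 0, ?_⟩
      have h3 := hdecomp (T (vmid n (S^[k] c))) (hTlast _)
      rw [Function.iterate_succ_apply']
      conv_lhs => rw [h3]
  have hSnil : ∀ c, S^[n+2] c = 0 := by
    intro c
    funext j
    obtain ⟨t, ht⟩ := hiterate (n+2) c
    rw [hker_top] at ht
    have h1 := congrFun ht (midIx n j)
    simp only [Pi.zero_apply, Pi.add_apply, Pi.smul_apply, smul_eq_mul,
      eMinus_apply_mid, vmid_apply_mid, mul_zero, zero_add] at h1
    simpa using h1.symm
  have hSsym : ∀ c d : Fin n → ℝ, (∑ j : Fin n, S c j * d j) = ∑ j : Fin n, c j * S d j := by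
    intro c d
    have h1 : (∑ j : Fin n, S c j * d j) = wB n (T (vmid n c)) (vmid n d) := by
      rw [wB_vmid_right]
    have h3 : wB n (vmid n c) (T (vmid n d)) = ∑ j : Fin n, c j * S d j := wB_vmid_left _ _
    rw [h1, hTsym, h3]
  have hSsym_iter : ∀ (k : ℕ) (c d : Fin n → ℝ),
      (∑ j : Fin n, S^[k] c j * d j) = ∑ j : Fin n, c j * S^[k] d j := by
    intro k
    induction k with
    | zero => intro c d; rfl
    | succ k ih =>
      intro c d
      calc (∑ j : Fin n, S^[k+1] c j * d j)
          = ∑ j : Fin n, S^[k] (S c) j * d j := by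
            simp only [Function.iterate_succ_apply]
        _ = ∑ j : Fin n, (S c) j * S^[k] d j := ih _ _
        _ = ∑ j : Fin n, c j * S (S^[k] d) j := hSsym _ _
        _ = ∑ j : Fin n, c j * S^[k+1] d j := by
            simp only [Function.iterate_succ_apply']
  have hstep : ∀ k : ℕ, (∀ c, S^[k+2] c = 0) → ∀ c, S^[k+1] c = 0 := by
    intro k hk c
    have h2 : S^[k+1] (S^[k+1] c) = 0 := by
      have e1 : S^[k+1] (S^[k+1] c) = S^[(k+1)+(k+1)] c :=
        (Function.iterate_add_apply S (k+1) (k+1) c).symm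
      have e2 : (k+1)+(k+1) = (k+2)+k := by omega
      rw [e1, e2, Function.iterate_add_apply]
      exact hk _
    have h1 : (∑ j : Fin n, S^[k+1] c j * S^[k+1] c j) = 0 := by
      rw [hSsym_iter (k+1) c (S^[k+1] c), h2]
      simp
    have h3 := (Finset.sum_eq_zero_iff_of_nonneg
      (fun j _ => mul_self_nonneg (S^[k+1] c j))).mp h1
    funext j
    have h4 := h3 j (Finset.mem_univ j)
    simpa using mul_self_eq_zero.mp h4
  have hdown : ∀ k : ℕ, (∀ c, S^[k+1] c = 0) → ∀ c, S c = 0 := by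
    intro k
    induction k with
    | zero => intro hk c; simpa using hk c
    | succ k ih => intro hk; exact ih (hstep k hk)
  have hS0 : ∀ c, S c = 0 := hdown (n+1) (fun c => hSnil c)
  have hSval : ∀ c : Fin n → ℝ, (∑ j : Fin n, S c j * c j) =
      -(∑ j : Fin n, (Z (vmid n c)) (midIx n j) * (Z (vmid n c)) (midIx n j))
        - (a*a) * ∑ j : Fin n, c j * c j := by
    intro c
    have h1 : (∑ j : Fin n, S c j * c j) = wB n (T (vmid n c)) (vmid n c) := by
      rw [wB_vmid_right]
    rw [h1, hTapp, wB_sub_left, wB_smul_left]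
    have h2 : wB n (Z (Z (vmid n c))) (vmid n c)
        = - wB n (Z (vmid n c)) (Z (vmid n c)) := by
      rw [skew_pair hZs]
    rw [h2]
    have h3 : wB n (Z (vmid n c)) (Z (vmid n c)) = ∑ j : Fin n,
        (Z (vmid n c)) (midIx n j) * (Z (vmid n c)) (midIx n j) := by
      unfold wB
      rw [hZlast]
      simp
    have h4 : wB n (vmid n c) (vmid n c) = ∑ j : Fin n, c j * c j := by
      rw [wB_vmid_left]
      simp
    rw [h3, h4]
  have key : ∀ c : Fin n → ℝ,
      (∑ j : Fin n, (Z (vmid n c)) (midIx n j) * (Z (vmid n c)) (midIx n j)) = 0 ∧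
      (a*a) * (∑ j : Fin n, c j * c j) = 0 := by
    intro c
    have h1 := hSval c
    rw [hS0 c] at h1
    simp only [Pi.zero_apply, zero_mul, Finset.sum_const_zero] at h1
    have h2 : 0 ≤ ∑ j : Fin n, (Z (vmid n c)) (midIx n j) * (Z (vmid n c)) (midIx n j) :=
      Finset.sum_nonneg fun j _ => mul_self_nonneg _
    have h3 : 0 ≤ (a*a) * ∑ j : Fin n, c j * c j :=
      mul_nonneg (mul_self_nonneg a) (Finset.sum_nonneg fun j _ => mul_self_nonneg _)
    constructor <;> linarith
  have ha0 : a = 0 := by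
    obtain ⟨i₀⟩ : Nonempty (Fin n) := ⟨⟨0, hn⟩⟩
    have h1 := (key ((Pi.single i₀ 1 : Fin n → ℝ))).2
    have h2 : (∑ j : Fin n, (Pi.single i₀ 1 : Fin n → ℝ) j
        * (Pi.single i₀ 1 : Fin n → ℝ) j) = 1 := by
      rw [Finset.sum_eq_single i₀]
      · simp
      · intro b _ hb; simp [Pi.single_apply, hb]
      · intro hb; exact absurd (Finset.mem_univ _) hb
    rw [h2, mul_one] at h1
    exact mul_self_eq_zero.mp h1
  have hAmid : ∀ i j : Fin n, (Z (eMid n i)) (midIx n j) = 0 := by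
    intro i j
    have h1 := (key ((Pi.single i 1 : Fin n → ℝ))).1
    rw [vmid_single] at h1
    have h2 := (Finset.sum_eq_zero_iff_of_nonneg
      (fun j _ => mul_self_nonneg _)).mp h1 j (Finset.mem_univ j)
    exact mul_self_eq_zero.mp h2
  -- Step E : assemble
  have hZeq : Z = barE n (fun i => (Z (ePlus n)) (midIx n i)) := by
    apply Module.Basis.ext (Pi.basisFun ℝ (Fin (n+2)))
    intro p
    rw [Pi.basisFun_apply]
    rcases ix_cases p with rfl | rfl | ⟨i, rfl⟩
    · have he : (Pi.single (0:Fin (n+2)) (1:ℝ)) = eMinus n := rfl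
      rw [he, hZm, ha0, barE_eMinus, zero_smul]
    · have he : (Pi.single (lastIx n) (1:ℝ)) = ePlus n := rfl
      rw [he, barE_ePlus]
      funext q
      rcases ix_cases q with rfl | rfl | ⟨j, rfl⟩
      · rw [skew_zero_plus hZs, vmid_apply_zero]
      · rw [skew_minus_plus hZs, vmid_apply_last, ← ha_def, ha0, neg_zero]
      · rw [vmid_apply_mid]
    · have he : (Pi.single (midIx n i) (1:ℝ)) = eMid n i := rfl
      rw [he, barE_eMid]
      funext q
      rcases ix_cases q with rfl | rfl | ⟨j, rfl⟩
      · rw [skew_mid_zero hZs i]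
        simp
      · rw [skew_mid_last hZs i, hu i]
        simp
      · rw [hAmid i j]
        simp
  refine ⟨fun i => (Z (ePlus n)) (midIx n i), hZeq, fun X hX => ?_⟩
  apply pi0_of_barE_comm (hp X hX)
  rw [← hZeq]
  exact hZc X hX

end Forward

/-- Let `𝔥 ⊆ 𝔭 ⊂ so(1,n+1)` (`n ≥ 1`) be indecomposable and let `z_𝔤(𝔥)` be
its centraliser in `𝔤 = so(1,n+1)`. If `π_ℝ(𝔥) ≠ 0` then `z_𝔤(𝔥) = {0}`; otherwise
`z_𝔤(𝔥) = { z̄ ∈ 𝔤₋ : π₀(𝔥)·z = 0 }` (in particular it is contained in `𝔤₋`). -/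
theorem stmt3 (n : ℕ) (hn : 1 ≤ n) (h : LieSubalgebra ℝ (Module.End ℝ (Vm n)))
    (hp : ∀ X ∈ h, MemP n X)
    (hind : Indecomp n h) :
    ((∃ X ∈ h, piR n X ≠ 0) →
      ∀ Z : Module.End ℝ (Vm n), IsSkewB n Z → (∀ X ∈ h, Z * X = X * Z) → Z = 0) ∧
    ((∀ X ∈ h, piR n X = 0) →
      ∀ Z : Module.End ℝ (Vm n),
        ((IsSkewB n Z ∧ ∀ X ∈ h, Z * X = X * Z) ↔
          (∃ z : Fin n → ℝ, Z = barE n z ∧ ∀ X ∈ h, pi0Act n X z = 0))) := by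
  constructor
  · rintro ⟨X₀, hX₀, hα⟩ Z hZs hZc
    obtain ⟨w, hZeq, hpi⟩ := forward_main hn h hp hind Z hZs hZc
    have hX₀s : IsSkewB n X₀ := (hp X₀ hX₀).1
    set α : ℝ := piR n X₀ with hαdef
    set B : Fin n → Fin n → ℝ := fun j i => (X₀ (eMid n j)) (midIx n i) with hB
    have hz' : ∀ i : Fin n, α * w i + ∑ j : Fin n, B j i * w j = 0 := by
      intro i
      have h1 := congrFun (hpi X₀ hX₀) i
      simpa only [pi0Act, wB_eMid_right, Pi.zero_apply, hB] using h1
    have hanti : ∀ i j : Fin n, B j i = - B i j := fun i j => skew_mid_mid hX₀s j i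
    have h2 : (∑ i : Fin n, ∑ j : Fin n, B j i * w j * w i)
        = ∑ i : Fin n, ∑ j : Fin n, B i j * w i * w j :=
      Finset.sum_comm
    have h3 : (∑ i : Fin n, ∑ j : Fin n, (B j i * w j * w i + B i j * w i * w j)) = 0 :=
      Finset.sum_eq_zero fun i _ => Finset.sum_eq_zero fun j _ => by
        rw [hanti i j]; ring
    have h4 : (∑ i : Fin n, ∑ j : Fin n, (B j i * w j * w i + B i j * w i * w j))
        = (∑ i : Fin n, ∑ j : Fin n, B j i * w j * w i)
          + (∑ i : Fin n, ∑ j : Fin n, B i j * w i * w j) := by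
      rw [← Finset.sum_add_distrib]
      exact Finset.sum_congr rfl fun i _ => Finset.sum_add_distrib
    have hD : (∑ i : Fin n, ∑ j : Fin n, B j i * w j * w i) = 0 := by
      rw [h4, ← h2] at h3
      linarith
    have h5 : α * (∑ i : Fin n, w i * w i)
        = -(∑ i : Fin n, ∑ j : Fin n, B j i * w j * w i) := by
      rw [Finset.mul_sum, ← Finset.sum_neg_distrib]
      refine Finset.sum_congr rfl fun i _ => ?_
      have h8 : (α * w i + ∑ j : Fin n, B j i * w j) * w i = 0 := by
        rw [hz' i, zero_mul]
      rw [add_mul, Finset.sum_mul] at h8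
      rw [← mul_assoc]
      linarith [h8]
    rw [hD, neg_zero] at h5
    have hww : (∑ i : Fin n, w i * w i) = 0 := by
      rcases mul_eq_zero.mp h5 with h' | h'
      · exact absurd h' hα
      · exact h'
    have hw0 : ∀ i, w i = 0 := by
      intro i
      exact mul_self_eq_zero.mp ((Finset.sum_eq_zero_iff_of_nonneg
        (fun j _ => mul_self_nonneg (w j))).mp hww i (Finset.mem_univ i))
    rw [hZeq]
    exact barE_eq_zero w hw0
  · intro _ Z
    constructor
    · rintro ⟨hZs, hZc⟩
      exact forward_main hn h hp hind Z hZs hZc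
    · rintro ⟨z, rfl, hz⟩
      exact ⟨barE_skew z, fun X hX => barE_comm h hp z hz X hX⟩
end

section
/- Let ∇ and ∇̃ be two metric connections with ∇ torsion-free, ∇̃ with parallel torsion and parallel curvature (∇̃R̃ = 0, ∇̃T = 0). Then the curvature R of the Levi-Civita connection ∇ is ∇̃-parallel, and ∇_X R = S(X)·R for all X, where S is the difference tensor and S(X)·R denotes the action of the skew endomorphism S(X) as a derivation on the tensor R. -/
/-- The torsion `T(X,Y) = ∇_X Y − ∇_Y X − [X,Y]` of a connection. -/
def torsOf {VF : Type*} [LieRing VF] [LieAlgebra ℝ VF]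
    (c : VF → VF → VF) (X Y : VF) : VF :=
  c X Y - c Y X - ⁅X, Y⁆

/-- The curvature of a connection. -/
def curvOf {VF : Type*} [LieRing VF] [LieAlgebra ℝ VF]
    (c : VF → VF → VF) (X Y Z : VF) : VF :=
  c X (c Y Z) - c Y (c X Z) - c ⁅X, Y⁆ Z

/-- The covariant derivative `(∇_X β)(Y,Z)W` of a `(3,1)`-tensor `β` with respect to a
connection `c`. -/
def covD3 {VF : Type*} [LieRing VF] [LieAlgebra ℝ VF]
    (c : VF → VF → VF) (β : VF → VF → VF → VF) (X Y Z W : VF) : VF :=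
  c X (β Y Z W) - β (c X Y) Z W - β Y (c X Z) W - β Y Z (c X W)

private lemma half_cancel' {A : Type*} [AddCommGroup A] [Module ℝ A] {a b : A}
    (h : a + a = b + b) : a = b := by
  have h2 : (2:ℝ) • a = (2:ℝ) • b := by rw [two_smul, two_smul]; exact h
  have h3 := congrArg (fun x => (2⁻¹:ℝ) • x) h2
  simpa [smul_smul] using h3

private lemma eq_add2' {M : Type*} [AddCommGroup M] {a b c : M}
    (h : a - b - c = 0) : a = b + c := by
  rw [← sub_eq_zero, ← h]; abel

private lemma eq_add3' {M : Type*} [AddCommGroup M] {a b c d : M}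
    (h : a - b - c - d = 0) : a = b + c + d := by
  rw [← sub_eq_zero, ← h]; abel

/-- Let `∇` and `∇̃` be metric connections, `∇` torsion-free (Levi-Civita)
and `∇̃` with parallel torsion and parallel curvature (`∇̃R̃ = 0`, `∇̃T = 0`).  Then the
Levi-Civita curvature `R` is `∇̃`-parallel, and `∇_X R = S(X)·R`, where `S = ∇ − ∇̃` and
`S(X)·R` is the action of `S(X)` as a derivation on the tensor `R`. -/
theorem stmt12 {VF A : Type*} [LieRing VF] [LieAlgebra ℝ VF] [CommRing A] [Algebra ℝ A]
    (D : VF →ₗ[ℝ] A →ₗ[ℝ] A)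
    (hD : ∀ (X : VF) (a b : A), D X (a * b) = a * D X b + D X a * b)
    (g : VF →ₗ[ℝ] VF →ₗ[ℝ] A)
    (hgsym : ∀ X Y : VF, g X Y = g Y X)
    (hgnd : ∀ X : VF, (∀ Z : VF, g X Z = 0) → X = 0)
    (nb tn : VF →ₗ[ℝ] VF →ₗ[ℝ] VF)
    (hcomp : ∀ X Y Z : VF, D X (g Y Z) = g (nb X Y) Z + g Y (nb X Z))
    (hcompt : ∀ X Y Z : VF, D X (g Y Z) = g (tn X Y) Z + g Y (tn X Z))
    (htf : ∀ X Y : VF, torsOf (fun u v => nb u v) X Y = 0)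
    (hpt : ∀ X Y Z : VF,
      tn X (torsOf (fun u v => tn u v) Y Z)
        - torsOf (fun u v => tn u v) (tn X Y) Z
        - torsOf (fun u v => tn u v) Y (tn X Z) = 0)
    (hpr : ∀ X Y Z W : VF, covD3 (fun u v => tn u v) (curvOf (fun u v => tn u v)) X Y Z W = 0) :
    (∀ X Y Z W : VF, covD3 (fun u v => tn u v) (curvOf (fun u v => nb u v)) X Y Z W = 0) ∧
    (∀ X Y Z W : VF,
      covD3 (fun u v => nb u v) (curvOf (fun u v => nb u v)) X Y Z W
        = (nb X (curvOf (fun u v => nb u v) Y Z W) - tn X (curvOf (fun u v => nb u v) Y Z W))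
          - curvOf (fun u v => nb u v) (nb X Y - tn X Y) Z W
          - curvOf (fun u v => nb u v) Y (nb X Z - tn X Z) W
          - curvOf (fun u v => nb u v) Y Z (nb X W - tn X W)) := by
  -- the difference tensor S and the torsion T of tn, as atomic functions
  obtain ⟨S, hSdef⟩ : ∃ S : VF → VF → VF, ∀ a b, S a b = nb a b - tn a b :=
    ⟨_, fun _ _ => rfl⟩
  obtain ⟨T, hTdef⟩ : ∃ T : VF → VF → VF, ∀ a b, T a b = tn a b - tn b a - ⁅a, b⁆ :=
    ⟨_, fun _ _ => rfl⟩
  have hT' : ∀ a b : VF, torsOf (fun u v => tn u v) a b = T a b := by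
    intro a b; rw [hTdef]; rfl
  -- bilinearity of S
  have hS1 : ∀ a b c : VF, S (a + b) c = S a c + S b c := by
    intro a b c; simp only [hSdef, map_add, LinearMap.add_apply]; abel
  have hS1s : ∀ a b c : VF, S (a - b) c = S a c - S b c := by
    intro a b c; simp only [hSdef, map_sub, LinearMap.sub_apply]; abel
  have hS2 : ∀ a b c : VF, S a (b + c) = S a b + S a c := by
    intro a b c; simp only [hSdef, map_add]; abel
  have hnb : ∀ a b : VF, nb a b = tn a b + S a b := by
    intro a b; rw [hSdef]; abel
  -- parallel torsion, rearranged
  have hDT : ∀ X Y Z : VF, tn X (T Y Z) = T (tn X Y) Z + T Y (tn X Z) := by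
    intro X Y Z
    have h := hpt X Y Z
    simp only [hT'] at h
    exact eq_add2' h
  -- skew-symmetry of S
  have hA : ∀ X Y Z : VF, g (S X Y) Z + g (S X Z) Y = 0 := by
    intro X Y Z
    simp only [hSdef, map_sub, LinearMap.sub_apply]
    linear_combination hcompt X Y Z - hcomp X Y Z - hgsym Y (nb X Z) + hgsym Y (tn X Z)
  -- antisymmetrization of S is minus the torsion
  have hB : ∀ X Y : VF, S X Y - S Y X = -(T X Y) := by
    intro X Y
    have h := htf X Y
    simp only [torsOf] at h
    rw [sub_eq_zero] at h
    rw [sub_eq_iff_eq_add] at h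
    rw [hSdef, hSdef, hTdef, h]
    abel
  have hBg : ∀ X Y Z : VF, g (S X Y) Z - g (S Y X) Z = - g (T X Y) Z := by
    intro X Y Z
    have h := congrArg (fun v => g v Z) (hB X Y)
    simpa [map_sub, map_neg, LinearMap.sub_apply, LinearMap.neg_apply] using h
  -- the contorsion formula
  have hC : ∀ X Y Z : VF,
      g (S X Y) Z + g (S X Y) Z = g (T Y Z) X - g (T Z X) Y - g (T X Y) Z := by
    intro X Y Z
    linear_combination hA X Y Z + hA Y X Z - hA Z X Y + hBg X Y Z - hBg Y Z X + hBg Z X Y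
  -- derivative rule for the torsion pairing
  have hE : ∀ X a b c : VF,
      D X (g (T a b) c)
        = g (T (tn X a) b) c + g (T a (tn X b)) c + g (T a b) (tn X c) := by
    intro X a b c
    rw [hcompt X (T a b) c, hDT]
    simp only [map_add, LinearMap.add_apply]
  -- S is tn-parallel (paired form)
  have hFg : ∀ X Y Z W : VF,
      g (tn X (S Y Z)) W = g (S (tn X Y) Z) W + g (S Y (tn X Z)) W := by
    intro X Y Z W
    apply half_cancel'
    have h1 := hcompt X (S Y Z) W
    have h2 := congrArg (D X) (hC Y Z W)
    simp only [map_add, map_sub] at h2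
    have h3 := hE X Z W Y
    have h4 := hE X W Y Z
    have h5 := hE X Y Z W
    have h6 := hC Y Z (tn X W)
    have h7 := hC (tn X Y) Z W
    have h8 := hC Y (tn X Z) W
    linear_combination (-2 : A) * h1 + h2 + h3 - h4 - h5 - h6 - h7 - h8
  -- S is tn-parallel
  have hF : ∀ X Y Z : VF, tn X (S Y Z) = S (tn X Y) Z + S Y (tn X Z) := by
    intro X Y Z
    refine sub_eq_zero.mp (hgnd _ fun W => ?_)
    simp only [map_sub, map_add, LinearMap.sub_apply, LinearMap.add_apply]
    linear_combination hFg X Y Z W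
  -- decomposition of the curvature of nb
  have hG : ∀ X Y Z : VF,
      curvOf (fun u v => nb u v) X Y Z
        = curvOf (fun u v => tn u v) X Y Z + S (T X Y) Z
          + (S X (S Y Z) - S Y (S X Z)) := by
    intro X Y Z
    simp only [curvOf]
    rw [hTdef X Y]
    simp only [hnb, map_add, LinearMap.add_apply, hS1, hS1s, hS2, hF]
    abel
  -- parallel curvature of tn, rearranged
  have hprd : ∀ X Y Z W : VF,
      tn X (curvOf (fun u v => tn u v) Y Z W)
        = curvOf (fun u v => tn u v) (tn X Y) Z W
          + curvOf (fun u v => tn u v) Y (tn X Z) W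
          + curvOf (fun u v => tn u v) Y Z (tn X W) := by
    intro X Y Z W
    have h := hpr X Y Z W
    simp only [covD3] at h
    exact eq_add3' h
  -- the key parallelism of the curvature of nb
  have key : ∀ X Y Z W : VF,
      tn X (curvOf (fun u v => nb u v) Y Z W)
        = curvOf (fun u v => nb u v) (tn X Y) Z W
          + curvOf (fun u v => nb u v) Y (tn X Z) W
          + curvOf (fun u v => nb u v) Y Z (tn X W) := by
    intro X Y Z W
    simp only [hG]
    simp only [map_add, map_sub, hF, hDT, hS1, hS2, hprd]
    abel
  have part1 : ∀ X Y Z W : VF,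
      covD3 (fun u v => tn u v) (curvOf (fun u v => nb u v)) X Y Z W = 0 := by
    intro X Y Z W
    simp only [covD3]
    rw [key]
    abel
  refine ⟨part1, ?_⟩
  -- multilinearity of the curvature of nb
  have hR1 : ∀ a b Z W : VF,
      curvOf (fun u v => nb u v) (a - b) Z W
        = curvOf (fun u v => nb u v) a Z W - curvOf (fun u v => nb u v) b Z W := by
    intro a b Z W
    simp only [curvOf, map_sub, LinearMap.sub_apply, sub_lie]
    abel
  have hR2 : ∀ Y a b W : VF,
      curvOf (fun u v => nb u v) Y (a - b) W
        = curvOf (fun u v => nb u v) Y a W - curvOf (fun u v => nb u v) Y b W := by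
    intro Y a b W
    simp only [curvOf, map_sub, LinearMap.sub_apply, lie_sub]
    abel
  have hR3 : ∀ Y Z a b : VF,
      curvOf (fun u v => nb u v) Y Z (a - b)
        = curvOf (fun u v => nb u v) Y Z a - curvOf (fun u v => nb u v) Y Z b := by
    intro Y Z a b
    simp only [curvOf, map_sub, LinearMap.sub_apply]
    abel
  intro X Y Z W
  have h1 := part1 X Y Z W
  simp only [covD3] at h1 ⊢
  have h1' := eq_add3' h1
  simp only [hR1, hR2, hR3]
  rw [h1']
  abel
end

section
/- Let ∇̃ be a 2-symmetric metric connection (∇̃∇̃R̃ = 0) on a Lorentzian manifold (M,g) and ξ a ∇̃-recurrent vector field with ∇̃ξ = θ ⊗ ξ. Then ∇̃(dθ) is a ∇̃-parallel tensor field; if moreover ∇̃R̃ = 0, then dθ itself is ∇̃-parallel. -/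
/-- The covariant derivative of an `A`-valued 2-tensor. -/
def covT2 {VF A : Type*} [LieRing VF] [LieAlgebra ℝ VF] [CommRing A] [Algebra ℝ A]
    (D : VF → A →ₗ[ℝ] A) (c : VF → VF → VF) (ω : VF → VF → A) (X Y Z : VF) : A :=
  D X (ω Y Z) - ω (c X Y) Z - ω Y (c X Z)

/-- The covariant derivative of an `A`-valued 3-tensor. -/
def covT3 {VF A : Type*} [LieRing VF] [LieAlgebra ℝ VF] [CommRing A] [Algebra ℝ A]
    (D : VF → A →ₗ[ℝ] A) (c : VF → VF → VF) (α : VF → VF → VF → A) (V X Y Z : VF) : A :=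
  D V (α X Y Z) - α (c V X) Y Z - α X (c V Y) Z - α X Y (c V Z)

/-- The covariant derivative of a vector-valued 3-tensor. -/
def covV3 {VF : Type*} [LieRing VF] [LieAlgebra ℝ VF]
    (c : VF → VF → VF) (β : VF → VF → VF → VF) (V X Y Z : VF) : VF :=
  c V (β X Y Z) - β (c V X) Y Z - β X (c V Y) Z - β X Y (c V Z)

/-- The covariant derivative of a vector-valued 4-tensor. -/
def covV4 {VF : Type*} [LieRing VF] [LieAlgebra ℝ VF]
    (c : VF → VF → VF) (γ : VF → VF → VF → VF → VF) (U V X Y Z : VF) : VF :=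
  c U (γ V X Y Z) - γ (c U V) X Y Z - γ V (c U X) Y Z - γ V X (c U Y) Z - γ V X Y (c U Z)

/-- The exterior derivative of the 1-form `θ`. -/
def dOne {VF A : Type*} [LieRing VF] [LieAlgebra ℝ VF] [CommRing A] [Algebra ℝ A]
    (D : VF → A →ₗ[ℝ] A) (θ : VF →ₗ[ℝ] A) (X Y : VF) : A :=
  D X (θ Y) - D Y (θ X) - θ ⁅X, Y⁆

/-- Let `∇̃` be a 2-symmetric metric connection (`∇̃∇̃R̃ = 0`) on a
Lorentzian manifold and `ξ` a `∇̃`-recurrent vector field with `∇̃ξ = θ ⊗ ξ`.  Then `∇̃(dθ)`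
is a `∇̃`-parallel tensor field; if moreover `∇̃R̃ = 0`, then `dθ` itself is `∇̃`-parallel. -/
theorem stmt14 {VF A : Type*} [LieRing VF] [LieAlgebra ℝ VF] [CommRing A] [Algebra ℝ A]
    [Module A VF] [IsScalarTower ℝ A VF]
    (D : VF →ₗ[ℝ] A →ₗ[ℝ] A)
    (hD : ∀ (X : VF) (a b : A), D X (a * b) = a * D X b + D X a * b)
    (hDA : ∀ (a : A) (X : VF) (b : A), D (a • X) b = a * D X b)
    (hbr : ∀ (X : VF) (a : A) (Y : VF), ⁅X, a • Y⁆ = D X a • Y + a • ⁅X, Y⁆)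
    (g : VF →ₗ[ℝ] VF →ₗ[ℝ] A)
    (hgsym : ∀ X Y : VF, g X Y = g Y X)
    (hgnd : ∀ X : VF, (∀ Z : VF, g X Z = 0) → X = 0)
    (tn : VF →ₗ[ℝ] VF →ₗ[ℝ] VF)
    (hcompt : ∀ X Y Z : VF, D X (g Y Z) = g (tn X Y) Z + g Y (tn X Z))
    (hLeib : ∀ (X : VF) (a : A) (Y : VF), tn X (a • Y) = D X a • Y + a • tn X Y)
    (hAlin : ∀ (a : A) (X Y : VF), tn (a • X) Y = a • tn X Y)
    (ξ : VF) (θ : VF →ₗ[ℝ] A)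
    (hθA : ∀ (a : A) (X : VF), θ (a • X) = a * θ X)
    (hreg : ∀ a : A, a • ξ = 0 → a = 0)
    (hrec : ∀ X : VF, tn X ξ = θ X • ξ)
    (h2sym : ∀ U V X Y Z : VF,
      covV4 (fun u v => tn u v) (covV3 (fun u v => tn u v) (curvOf (fun u v => tn u v)))
        U V X Y Z = 0) :
    (∀ V X Y Z : VF,
      covT3 (fun u => D u) (fun u v => tn u v)
        (covT2 (fun u => D u) (fun u v => tn u v) (dOne (fun u => D u) θ)) V X Y Z = 0) ∧
    ((∀ X Y Z W : VF,
        covV3 (fun u v => tn u v) (curvOf (fun u v => tn u v)) X Y Z W = 0) →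
      ∀ X Y Z : VF,
        covT2 (fun u => D u) (fun u v => tn u v) (dOne (fun u => D u) θ) X Y Z = 0) := by

  -- Notation
  set R := curvOf (fun u v => tn u v) with hRdef
  set dθ := dOne (fun u => D u) θ with hdθdef
  -- scalar curvature of D vanishes (smul form), via the Jacobi identity
  have hκ0 : ∀ (a : A) (X Y Z : VF),
      (D X (D Y a) - D Y (D X a) - D ⁅X, Y⁆ a) • Z = 0 := by
    intro a X Y Z
    have h := leibniz_lie X Y (a • Z)
    rw [hbr Y a Z, lie_add, hbr X (D Y a) Z, hbr X a ⁅Y, Z⁆,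
        hbr ⁅X, Y⁆ a Z, hbr X a Z, lie_add, hbr Y (D X a) Z, hbr Y a ⁅X, Z⁆,
        leibniz_lie X Y Z] at h
    rw [sub_smul, sub_smul]
    linear_combination (norm := module) h
  -- scalar form
  have hDD : ∀ (a : A) (X Y : VF),
      D X (D Y a) = D Y (D X a) + D ⁅X, Y⁆ a := by
    intro a X Y
    have h := hreg _ (hκ0 a X Y ξ)
    linear_combination h
  -- curvature applied to ξ
  have hRξ : ∀ X Y : VF, R X Y ξ = dθ X Y • ξ := by
    intro X Y
    show tn X (tn Y ξ) - tn Y (tn X ξ) - tn ⁅X, Y⁆ ξ = _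
    rw [hrec Y, hrec X, hrec ⁅X, Y⁆, hLeib X (θ Y) ξ, hLeib Y (θ X) ξ, hrec X, hrec Y]
    show _ = (D X (θ Y) - D Y (θ X) - θ ⁅X, Y⁆) • ξ
    module
  -- curvature is A-linear in its last slot
  have hRs : ∀ (X Y : VF) (a : A) (Z : VF), R X Y (a • Z) = a • R X Y Z := by
    intro X Y a Z
    show tn X (tn Y (a • Z)) - tn Y (tn X (a • Z)) - tn ⁅X, Y⁆ (a • Z)
      = a • (tn X (tn Y Z) - tn Y (tn X Z) - tn ⁅X, Y⁆ Z)
    rw [hLeib Y a Z, hLeib X a Z, hLeib ⁅X, Y⁆ a Z, map_add, map_add,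
        hLeib X (D Y a) Z, hLeib X a (tn Y Z), hLeib Y (D X a) Z, hLeib Y a (tn X Z),
        hDD a X Y]
    module
  -- curvature is additive in its last slot
  have hRadd : ∀ (X Y : VF) (u v : VF), R X Y (u + v) = R X Y u + R X Y v := by
    intro X Y u v
    simp only [hRdef, curvOf, map_add]
    abel
  -- ∇R applied to ξ
  have hC3ξ : ∀ V X Y : VF,
      covV3 (fun u v => tn u v) R V X Y ξ = covT2 (fun u => D u) (fun u v => tn u v) dθ V X Y • ξ := by
    intro V X Y
    show tn V (R X Y ξ) - R (tn V X) Y ξ - R X (tn V Y) ξ - R X Y (tn V ξ)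
      = (D V (dθ X Y) - dθ (tn V X) Y - dθ X (tn V Y)) • ξ
    rw [hRξ X Y, hRξ (tn V X) Y, hRξ X (tn V Y), hrec V, hRs X Y (θ V) ξ, hRξ X Y,
        hLeib V (dθ X Y) ξ, hrec V]
    module
  -- ∇R is A-linear in its last slot
  have hC3s : ∀ (V X Y : VF) (a : A) (Z : VF),
      covV3 (fun u v => tn u v) R V X Y (a • Z) = a • covV3 (fun u v => tn u v) R V X Y Z := by
    intro V X Y a Z
    show tn V (R X Y (a • Z)) - R (tn V X) Y (a • Z) - R X (tn V Y) (a • Z)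
        - R X Y (tn V (a • Z))
      = a • (tn V (R X Y Z) - R (tn V X) Y Z - R X (tn V Y) Z - R X Y (tn V Z))
    rw [hRs X Y a Z, hRs (tn V X) Y a Z, hRs X (tn V Y) a Z, hLeib V a Z,
        hRadd X Y, hRs X Y (D V a) Z, hRs X Y a (tn V Z), hLeib V a (R X Y Z)]
    module
  -- ∇∇R applied to ξ
  have hC4ξ : ∀ U V X Y : VF,
      covV4 (fun u v => tn u v) (covV3 (fun u v => tn u v) R) U V X Y ξ
        = covT3 (fun u => D u) (fun u v => tn u v)
            (covT2 (fun u => D u) (fun u v => tn u v) dθ) U V X Y • ξ := by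
    intro U V X Y
    show tn U (covV3 (fun u v => tn u v) R V X Y ξ)
        - covV3 (fun u v => tn u v) R (tn U V) X Y ξ
        - covV3 (fun u v => tn u v) R V (tn U X) Y ξ
        - covV3 (fun u v => tn u v) R V X (tn U Y) ξ
        - covV3 (fun u v => tn u v) R V X Y (tn U ξ)
      = (D U (covT2 (fun u => D u) (fun u v => tn u v) dθ V X Y)
          - covT2 (fun u => D u) (fun u v => tn u v) dθ (tn U V) X Y
          - covT2 (fun u => D u) (fun u v => tn u v) dθ V (tn U X) Y
          - covT2 (fun u => D u) (fun u v => tn u v) dθ V X (tn U Y)) • ξ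
    rw [hC3ξ V X Y, hC3ξ (tn U V) X Y, hC3ξ V (tn U X) Y, hC3ξ V X (tn U Y),
        hrec U, hC3s V X Y (θ U) ξ, hC3ξ V X Y,
        hLeib U (covT2 (fun u => D u) (fun u v => tn u v) dθ V X Y) ξ, hrec U]
    module
  constructor
  · intro V X Y Z
    apply hreg
    rw [← hC4ξ V X Y Z]
    exact h2sym V X Y Z ξ
  · intro hpar X Y Z
    apply hreg
    rw [← hC3ξ X Y Z]
    exact hpar X Y Z ξ
end

section
/- Consider the 3-dimensional Lie algebra m with basis (e_-, e_1, e_+) and brackets [e_-,e_1] = −2a e_-, [e_-,e_+] = 2a e_1, [e_1,e_+] = −2a e_+ + ((2ac+1)/(2a)) e_-, where a ≠ 0 and c ∈ ℝ. Then m is perfect ([m,m] = m) and its Killing form is nondegenerate and indefinite; hence m ≅ sl(2,ℝ). -/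
open LieAlgebra.SpecialLinear LinearMap

namespace Stmt17Aux

noncomputable def Em : sl (Fin 2) ℝ := ⟨!![0,1;0,0], by
  show Matrix.traceLinearMap (Fin 2) ℝ ℝ _ = 0
  simp [Matrix.trace_fin_two]⟩
noncomputable def Hm : sl (Fin 2) ℝ := ⟨!![1,0;0,-1], by
  show Matrix.traceLinearMap (Fin 2) ℝ ℝ _ = 0
  simp [Matrix.trace_fin_two]⟩
noncomputable def Fm : sl (Fin 2) ℝ := ⟨!![0,0;1,0], by
  show Matrix.traceLinearMap (Fin 2) ℝ ℝ _ = 0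
  simp [Matrix.trace_fin_two]⟩

@[simp] lemma Em_val : Em.val = !![0,1;0,0] := rfl
@[simp] lemma Hm_val : Hm.val = !![1,0;0,-1] := rfl
@[simp] lemma Fm_val : Fm.val = !![0,0;1,0] := rfl
@[simp] lemma sl_val_smul (c : ℝ) (x : sl (Fin 2) ℝ) : (c • x).val = c • x.val := rfl
@[simp] lemma sl_val_add (x y : sl (Fin 2) ℝ) : (x + y).val = x.val + y.val := rfl
@[simp] lemma sl_val_lie (x y : sl (Fin 2) ℝ) :
    (⁅x, y⁆ : sl (Fin 2) ℝ).val = x.val * y.val - y.val * x.val := rfl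

lemma lie_Em_Hm : ⁅Em, Hm⁆ = (-2 : ℝ) • Em := by
  apply Subtype.ext
  rw [sl_val_lie, sl_val_smul, Em_val, Hm_val]
  ext i j
  fin_cases i <;> fin_cases j <;>
    norm_num [Matrix.mul_apply, Fin.sum_univ_two, Matrix.smul_apply]

lemma lie_Em_Fm : ⁅Em, Fm⁆ = Hm := by
  apply Subtype.ext
  rw [sl_val_lie, Em_val, Fm_val, Hm_val]
  ext i j
  fin_cases i <;> fin_cases j <;>
    norm_num [Matrix.mul_apply, Fin.sum_univ_two]

lemma lie_Hm_Fm : ⁅Hm, Fm⁆ = (-2 : ℝ) • Fm := by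
  apply Subtype.ext
  rw [sl_val_lie, sl_val_smul, Hm_val, Fm_val]
  ext i j
  fin_cases i <;> fin_cases j <;>
    norm_num [Matrix.mul_apply, Fin.sum_univ_two, Matrix.smul_apply]

/-- The coordinate equivalence of `sl 2 ℝ` w.r.t. the basis `(E, H, F)`. -/
noncomputable def slCoords : ↥(sl (Fin 2) ℝ) ≃ₗ[ℝ] (Fin 3 → ℝ) where
  toFun M := ![M.val 0 1, M.val 0 0, M.val 1 0]
  map_add' x y := by
    funext i; fin_cases i <;> simp
  map_smul' r x := by
    funext i; fin_cases i <;> simp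
  invFun x := x 0 • Em + x 1 • Hm + x 2 • Fm
  left_inv M := by
    have htr : M.val 0 0 + M.val 1 1 = 0 := by
      have := M.property
      have h2 : Matrix.trace M.val = 0 := this
      rwa [Matrix.trace_fin_two] at h2
    apply Subtype.ext
    simp only [sl_val_add, sl_val_smul, Em_val, Hm_val, Fm_val]
    ext i j
    fin_cases i <;> fin_cases j <;>
      simp [Matrix.smul_apply] <;> linarith
  right_inv x := by
    funext i
    fin_cases i <;> simp [Matrix.smul_apply]

noncomputable def slB : Module.Basis (Fin 3) ℝ ↥(sl (Fin 2) ℝ) := Module.Basis.ofEquivFun slCoords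

@[simp] lemma slB_0 : slB 0 = Em := by
  rw [slB, Module.Basis.coe_ofEquivFun]
  show slCoords.symm _ = _
  apply slCoords.injective
  rw [LinearEquiv.apply_symm_apply]
  funext j; fin_cases j <;> simp [slCoords, Pi.single_apply]

@[simp] lemma slB_1 : slB 1 = Hm := by
  rw [slB, Module.Basis.coe_ofEquivFun]
  show slCoords.symm _ = _
  apply slCoords.injective
  rw [LinearEquiv.apply_symm_apply]
  funext j; fin_cases j <;> simp [slCoords, Pi.single_apply]

@[simp] lemma slB_2 : slB 2 = Fm := by
  rw [slB, Module.Basis.coe_ofEquivFun]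
  show slCoords.symm _ = _
  apply slCoords.injective
  rw [LinearEquiv.apply_symm_apply]
  funext j; fin_cases j <;> simp [slCoords, Pi.single_apply]

end Stmt17Aux

set_option maxHeartbeats 1000000 in
open LieAlgebra.SpecialLinear LinearMap Stmt17Aux in
/-- Consider the 3-dimensional Lie algebra `𝔪` with basis `(e₋, e₁, e₊)`
and brackets `[e₋,e₁] = −2a e₋`, `[e₋,e₊] = 2a e₁`,
`[e₁,e₊] = −2a e₊ + ((2ac+1)/(2a)) e₋`, with `a ≠ 0`.  Then `𝔪` is perfect, its Killing form
is nondegenerate and indefinite, and hence `𝔪 ≅ sl(2,ℝ)`. -/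
theorem stmt17 {L : Type*} [LieRing L] [LieAlgebra ℝ L] (a c : ℝ) (ha : a ≠ 0)
    (b : Module.Basis (Fin 3) ℝ L)
    (h01 : ⁅b 0, b 1⁆ = (-(2*a)) • b 0)
    (h02 : ⁅b 0, b 2⁆ = (2*a) • b 1)
    (h12 : ⁅b 1, b 2⁆ = (-(2*a)) • b 2 + ((2*a*c+1)/(2*a)) • b 0) :
    (⁅(⊤ : LieIdeal ℝ L), (⊤ : LieIdeal ℝ L)⁆ = ⊤) ∧
    (killingForm ℝ L).Nondegenerate ∧
    (∃ x : L, 0 < killingForm ℝ L x x) ∧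
    (∃ y : L, killingForm ℝ L y y < 0) ∧
    Nonempty (L ≃ₗ⁅ℝ⁆ ↥(LieAlgebra.SpecialLinear.sl (Fin 2) ℝ)) := by
  have h10 : ⁅b 1, b 0⁆ = (2*a) • b 0 := by rw [← lie_skew, h01]; module
  have h20 : ⁅b 2, b 0⁆ = (-(2*a)) • b 1 := by rw [← lie_skew, h02]; module
  have h21 : ⁅b 2, b 1⁆ = (2*a) • b 2 + (-((2*a*c+1)/(2*a))) • b 0 := by
    rw [← lie_skew, h12]; module
  have tr_eq : ∀ f : L →ₗ[ℝ] L, trace ℝ L f = ∑ i, b.repr (f (b i)) i := by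
    intro f
    rw [LinearMap.trace_eq_matrix_trace ℝ b, Matrix.trace]
    simp [Matrix.diag, LinearMap.toMatrix_apply]
  have key : ∀ x y : L, killingForm ℝ L x y = ∑ i, b.repr ⁅x, ⁅y, b i⁆⁆ i := by
    intro x y; rw [killingForm_apply_apply, tr_eq]; rfl
  have B00 : killingForm ℝ L (b 0) (b 0) = 0 := by
    rw [key, Fin.sum_univ_three]
    simp [h01, h02, h12, h10, h20, h21, lie_smul, lie_add, Finsupp.single_apply]
  have B01 : killingForm ℝ L (b 0) (b 1) = 0 := by
    rw [key, Fin.sum_univ_three]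
    simp [h01, h02, h12, h10, h20, h21, lie_smul, lie_add, Finsupp.single_apply]
  have B02 : killingForm ℝ L (b 0) (b 2) = 8*a^2 := by
    rw [key, Fin.sum_univ_three]
    simp [h01, h02, h12, h10, h20, h21, lie_smul, lie_add, Finsupp.single_apply]
    ring
  have B11 : killingForm ℝ L (b 1) (b 1) = 8*a^2 := by
    rw [key, Fin.sum_univ_three]
    simp [h01, h02, h12, h10, h20, h21, lie_smul, lie_add, Finsupp.single_apply]
    ring
  have B12 : killingForm ℝ L (b 1) (b 2) = 0 := by
    rw [key, Fin.sum_univ_three]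
    simp [h01, h02, h12, h10, h20, h21, lie_smul, lie_add, Finsupp.single_apply]
  have B22 : killingForm ℝ L (b 2) (b 2) = 2*(2*a*c+1) := by
    rw [key, Fin.sum_univ_three]
    simp [h01, h02, h12, h10, h20, h21, lie_smul, lie_add, Finsupp.single_apply]
    field_simp
    ring
  have Bcomm : ∀ x y : L, killingForm ℝ L x y = killingForm ℝ L y x := fun x y =>
    LieModule.traceForm_comm ℝ L L x y
  refine ⟨?_, ?_, ?_, ?_, ?_⟩
  · -- perfect
    have hm0 : b 0 ∈ ⁅(⊤ : LieIdeal ℝ L), (⊤ : LieIdeal ℝ L)⁆ := by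
      have h := LieSubmodule.lie_mem_lie (I := (⊤ : LieIdeal ℝ L))
        (N := (⊤ : LieIdeal ℝ L)) (x := b 0) (m := b 1) trivial trivial
      rw [h01] at h
      have := SMulMemClass.smul_mem (-(2*a))⁻¹ h
      rwa [smul_smul, inv_mul_cancel₀ (by simpa using ha), one_smul] at this
    have hm1 : b 1 ∈ ⁅(⊤ : LieIdeal ℝ L), (⊤ : LieIdeal ℝ L)⁆ := by
      have h := LieSubmodule.lie_mem_lie (I := (⊤ : LieIdeal ℝ L))
        (N := (⊤ : LieIdeal ℝ L)) (x := b 0) (m := b 2) trivial trivial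
      rw [h02] at h
      have := SMulMemClass.smul_mem (2*a)⁻¹ h
      rwa [smul_smul, inv_mul_cancel₀ (by simpa using ha), one_smul] at this
    have hm2 : b 2 ∈ ⁅(⊤ : LieIdeal ℝ L), (⊤ : LieIdeal ℝ L)⁆ := by
      have h := LieSubmodule.lie_mem_lie (I := (⊤ : LieIdeal ℝ L))
        (N := (⊤ : LieIdeal ℝ L)) (x := b 1) (m := b 2) trivial trivial
      rw [h12] at h
      have h2 := sub_mem h (SMulMemClass.smul_mem ((2*a*c+1)/(2*a)) hm0)
      rw [add_sub_cancel_right] at h2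
      have := SMulMemClass.smul_mem (-(2*a))⁻¹ h2
      rwa [smul_smul, inv_mul_cancel₀ (by simpa using ha), one_smul] at this
    rw [eq_top_iff]
    intro x _
    have hx := Module.Basis.sum_repr b x
    rw [← hx]
    exact sum_mem fun i _ => SMulMemClass.smul_mem _ (by fin_cases i <;> assumption)
  · -- nondegenerate
    rw [LinearMap.BilinForm.nondegenerate_iff_det_ne_zero b]
    have : (LinearMap.BilinForm.toMatrix b (killingForm ℝ L)).det = -512 * a^6 := by
      rw [Matrix.det_fin_three]
      simp only [LinearMap.BilinForm.toMatrix_apply]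
      rw [B00, B01, B02, B11, B12, B22, Bcomm (b 1) (b 0), Bcomm (b 2) (b 0),
        Bcomm (b 2) (b 1), B01, B02, B12]
      ring
    rw [this]
    exact mul_ne_zero (by norm_num) (pow_ne_zero _ ha)
  · exact ⟨b 1, by rw [B11]; positivity⟩
  · -- negative vector
    refine ⟨((2*(2*a*c+1)+8)/(16*a^2)) • b 0 - b 2, ?_⟩
    have hv : killingForm ℝ L (((2*(2*a*c+1)+8)/(16*a^2)) • b 0 - b 2)
        (((2*(2*a*c+1)+8)/(16*a^2)) • b 0 - b 2) = -8 := by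
      simp only [map_sub, map_smul, LinearMap.sub_apply, LinearMap.smul_apply, smul_eq_mul]
      rw [B00, B02, B22, Bcomm (b 2) (b 0), B02]
      field_simp
      ring
    rw [hv]; norm_num
  · -- equivalence with sl(2,ℝ)
    have lie_Hm_Em : ⁅Hm, Em⁆ = (2:ℝ) • Em := by rw [← lie_skew, lie_Em_Hm]; module
    have lie_Fm_Em : ⁅Fm, Em⁆ = -Hm := by rw [← lie_skew, lie_Em_Fm]
    have lie_Fm_Hm : ⁅Fm, Hm⁆ = (2:ℝ) • Fm := by rw [← lie_skew, lie_Hm_Fm]; module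
    set γ : ℝ := (2*a*c+1)/(8*a^2) with hγ
    set v : Fin 3 → ↥(sl (Fin 2) ℝ) := ![Em, a • Hm, (2*a^2) • Fm + γ • Em] with hv
    set w : Fin 3 → L := ![b 0, (1/a) • b 1, (1/(2*a^2)) • b 2 - (γ/(2*a^2)) • b 0] with hw
    set f : L →ₗ[ℝ] ↥(sl (Fin 2) ℝ) := b.constr ℝ v with hf
    set g : ↥(sl (Fin 2) ℝ) →ₗ[ℝ] L := slB.constr ℝ w with hg
    have fb0 : f (b 0) = Em := by rw [hf, Module.Basis.constr_basis]; simp [hv]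
    have fb1 : f (b 1) = a • Hm := by rw [hf, Module.Basis.constr_basis]; simp [hv]
    have fb2 : f (b 2) = (2*a^2) • Fm + γ • Em := by rw [hf, Module.Basis.constr_basis]; simp [hv]
    have gE : g Em = b 0 := by rw [← slB_0, hg, Module.Basis.constr_basis]; simp [hw]
    have gH : g Hm = (1/a) • b 1 := by rw [← slB_1, hg, Module.Basis.constr_basis]; simp [hw]
    have gF : g Fm = (1/(2*a^2)) • b 2 - (γ/(2*a^2)) • b 0 := by
      rw [← slB_2, hg, Module.Basis.constr_basis]; simp [hw]
    have hgf : g ∘ₗ f = LinearMap.id := by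
      apply b.ext
      intro i; fin_cases i
      · show g (f (b 0)) = b 0
        rw [fb0, gE]
      · show g (f (b 1)) = b 1
        rw [fb1, map_smul, gH, smul_smul]
        rw [mul_one_div, div_self ha, one_smul]
      · show g (f (b 2)) = b 2
        rw [fb2, map_add, map_smul, map_smul, gF, gE]
        match_scalars <;> field_simp <;> ring
    have hfg : f ∘ₗ g = LinearMap.id := by
      apply slB.ext
      intro i; fin_cases i
      · show f (g (slB 0)) = slB 0
        rw [slB_0, gE, fb0]
      · show f (g (slB 1)) = slB 1
        rw [slB_1, gH, map_smul, fb1, smul_smul, one_div, inv_mul_cancel₀ ha, one_smul]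
      · show f (g (slB 2)) = slB 2
        rw [slB_2, gF, map_sub, map_smul, map_smul, fb2, fb0]
        match_scalars <;> field_simp <;> ring
    have h9 : ∀ i j : Fin 3, f ⁅b i, b j⁆ = ⁅f (b i), f (b j)⁆ := by
      have tac : ∀ (x y : L) (z : ↥(sl (Fin 2) ℝ)), f ⁅x, y⁆ = z → ⁅f x, f y⁆ = z → f ⁅x, y⁆ = ⁅f x, f y⁆ := by
        intro x y z hz hz'; rw [hz, hz']
      intro i j
      fin_cases i <;> fin_cases j
      · show f ⁅b 0, b 0⁆ = ⁅f (b 0), f (b 0)⁆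
        simp
      · show f ⁅b 0, b 1⁆ = ⁅f (b 0), f (b 1)⁆
        rw [h01]
        simp only [map_add, map_smul, fb0, fb1, fb2, add_lie, lie_add, smul_lie, lie_smul,
          lie_self, lie_Em_Hm, lie_Em_Fm, lie_Hm_Fm, lie_Hm_Em, lie_Fm_Em, lie_Fm_Hm]
        match_scalars <;> field_simp <;> ring
      · show f ⁅b 0, b 2⁆ = ⁅f (b 0), f (b 2)⁆
        rw [h02]
        simp only [map_add, map_smul, fb0, fb1, fb2, add_lie, lie_add, smul_lie, lie_smul,
          lie_self, lie_Em_Hm, lie_Em_Fm, lie_Hm_Fm, lie_Hm_Em, lie_Fm_Em, lie_Fm_Hm]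
        match_scalars <;> field_simp <;> ring
      · show f ⁅b 1, b 0⁆ = ⁅f (b 1), f (b 0)⁆
        rw [h10]
        simp only [map_add, map_smul, fb0, fb1, fb2, add_lie, lie_add, smul_lie, lie_smul,
          lie_self, lie_Em_Hm, lie_Em_Fm, lie_Hm_Fm, lie_Hm_Em, lie_Fm_Em, lie_Fm_Hm]
        match_scalars <;> field_simp <;> ring
      · show f ⁅b 1, b 1⁆ = ⁅f (b 1), f (b 1)⁆
        simp
      · show f ⁅b 1, b 2⁆ = ⁅f (b 1), f (b 2)⁆
        rw [h12]
        simp only [map_add, map_smul, fb0, fb1, fb2, add_lie, lie_add, smul_lie, lie_smul,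
          lie_self, lie_Em_Hm, lie_Em_Fm, lie_Hm_Fm, lie_Hm_Em, lie_Fm_Em, lie_Fm_Hm]
        rw [hγ]
        match_scalars <;> field_simp <;> ring_nf <;> field_simp <;> ring
      · show f ⁅b 2, b 0⁆ = ⁅f (b 2), f (b 0)⁆
        rw [h20]
        simp only [map_add, map_smul, fb0, fb1, fb2, add_lie, lie_add, smul_lie, lie_smul,
          lie_self, lie_Em_Hm, lie_Em_Fm, lie_Hm_Fm, lie_Hm_Em, lie_Fm_Em, lie_Fm_Hm]
        match_scalars <;> field_simp <;> ring
      · show f ⁅b 2, b 1⁆ = ⁅f (b 2), f (b 1)⁆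
        rw [h21]
        simp only [map_add, map_smul, fb0, fb1, fb2, add_lie, lie_add, smul_lie, lie_smul,
          lie_self, lie_Em_Hm, lie_Em_Fm, lie_Hm_Fm, lie_Hm_Em, lie_Fm_Em, lie_Fm_Hm]
        rw [hγ]
        match_scalars <;> field_simp <;> ring_nf <;> field_simp <;> ring
      · show f ⁅b 2, b 2⁆ = ⁅f (b 2), f (b 2)⁆
        simp
    letI := LieRing.ofAssociativeRing (A := Module.End ℝ L)
    letI := LieRing.ofAssociativeRing (A := Module.End ℝ ↥(sl (Fin 2) ℝ))
    have hB : (LinearMap.compr₂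
          ((LieAlgebra.ad ℝ L).toLinearMap : L →ₗ[ℝ] Module.End ℝ L) f) =
        (((LieAlgebra.ad ℝ ↥(sl (Fin 2) ℝ)).toLinearMap).comp f).compl₂ f := by
      apply LinearMap.ext_basis b b
      intro i j
      simpa [LinearMap.compr₂_apply, LinearMap.compl₂_apply, LieAlgebra.ad_apply] using h9 i j
    have key2 : ∀ x y : L, f ⁅x, y⁆ = ⁅f x, f y⁆ := by
      intro x y
      have := congrArg (fun B : L →ₗ[ℝ] L →ₗ[ℝ] ↥(sl (Fin 2) ℝ) => B x y) hB
      simpa [LinearMap.compr₂_apply, LinearMap.compl₂_apply, LieAlgebra.ad_apply] using this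
    exact ⟨{ toLinearMap := f,
             map_lie' := fun {x y} => key2 x y,
             invFun := g,
             left_inv := fun x => LinearMap.congr_fun hgf x,
             right_inv := fun m => LinearMap.congr_fun hfg m }⟩
end
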